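/- Let C, S, R₁, R₂ ≥ 1 be real numbers, and let u, N, d₁, d₂ be positive integers. Suppose |u/N − a/q| ≤ 1/(qH) for some integers a, q with gcd(a,q) = 1, 1 ≤ q ≤ H ≤ N. Then the number of quadruples of integers (c, s, r₁, r₂) with C ≤ c < 2C, |s| ≤ S, |r₁| ≤ R₁, |r₂| ≤ R₂ and N dividing u²d₁d₂c + u(d₁r₂ + d₂r₁) + s is at most a constant times C·min(R₁,R₂)·( S(d₁R₂+d₂R₁)/N + Sq/N + (d₁R₂+d₂R₁)²/(qH) + (d₁R₂+d₂R₁)/q + 1 ). -/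

import Mathlib

open Finset

attribute [local instance] Classical.propDecidable

lemma card_le_of_forall_mem_Icc (F : Finset ℤ) (x y : ℝ) (hxy : x ≤ y + 1)
    (h : ∀ n ∈ F, x ≤ (n : ℝ) ∧ (n : ℝ) ≤ y) : (F.card : ℝ) ≤ y - x + 1 := by
  have hsub : F ⊆ Finset.Icc ⌈x⌉ ⌊y⌋ := by
    intro n hn
    simp only [Finset.mem_Icc]
    exact ⟨Int.ceil_le.2 (h n hn).1, Int.le_floor.2 (h n hn).2⟩
  have h1 : (F.card : ℝ) ≤ ((Finset.Icc ⌈x⌉ ⌊y⌋).card : ℝ) := by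
    exact_mod_cast Finset.card_le_card hsub
  refine h1.trans ?_
  rw [Int.card_Icc]
  have h2 : ((⌊y⌋ + 1 - ⌈x⌉).toNat : ℝ) = ((((⌊y⌋ + 1 - ⌈x⌉).toNat : ℤ)) : ℝ) := by
    push_cast; ring
  rw [h2, Int.toNat_eq_max]
  have h3 : (⌈x⌉ : ℝ) ≥ x := Int.le_ceil x
  have h4 : (⌊y⌋ : ℝ) ≤ y := Int.floor_le y
  have : ((max (⌊y⌋ + 1 - ⌈x⌉) 0 : ℤ) : ℝ) = max ((⌊y⌋ : ℝ) + 1 - ⌈x⌉) 0 := by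
    push_cast; rfl
  rw [this]
  apply max_le <;> linarith

lemma card_le_card_mul_of_fiber {α β : Type*} [DecidableEq α] [DecidableEq β]
    (A : Finset α) (f : α → β) (J : Finset β) (hJ : ∀ x ∈ A, f x ∈ J) (B : ℝ)
    (hB : ∀ j ∈ J, ((A.filter fun x => f x = j).card : ℝ) ≤ B) :
    (A.card : ℝ) ≤ J.card * B := by
  have hsub : A ⊆ J.biUnion (fun j => A.filter fun x => f x = j) := by
    intro x hx; exact Finset.mem_biUnion.2 ⟨f x, hJ x hx, Finset.mem_filter.2 ⟨hx, rfl⟩⟩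
  have h1 : (A.card : ℝ) ≤ ((J.biUnion (fun j => A.filter fun x => f x = j)).card : ℝ) := by
    exact_mod_cast Finset.card_le_card hsub
  refine h1.trans ?_
  have h2 : ((J.biUnion (fun j => A.filter fun x => f x = j)).card : ℝ)
      ≤ ∑ j ∈ J, ((A.filter fun x => f x = j).card : ℝ) := by
    exact_mod_cast Finset.card_biUnion_le
  refine h2.trans ?_
  calc ∑ j ∈ J, ((A.filter fun x => f x = j).card : ℝ) ≤ ∑ _j ∈ J, B :=
        Finset.sum_le_sum hB
    _ = J.card * B := by rw [Finset.sum_const, nsmul_eq_mul]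

lemma card_dvd_filter_le (N : ℕ) (hN : 0 < N) (A S' : ℤ) (hS' : 0 ≤ S') :
    (((Finset.Icc (-S') S').filter fun s => (N:ℤ) ∣ (A + s)).card : ℝ)
      ≤ 2 * (S':ℝ) / N + 1 := by
  have hN0 : (0:ℝ) < (N:ℝ) := by exact_mod_cast hN
  set G := (Finset.Icc (-S') S').filter fun s => (N:ℤ) ∣ (A + s) with hG
  have hinj : Set.InjOn (fun s => (A + s) / (N:ℤ)) G := by
    intro s hs s' hs' he
    simp only [hG, Finset.coe_filter, Set.mem_setOf_eq] at hs hs'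
    have e1 : A + s = (N:ℤ) * ((A + s) / N) := (Int.mul_ediv_cancel' hs.2).symm
    have e2 : A + s' = (N:ℤ) * ((A + s') / N) := (Int.mul_ediv_cancel' hs'.2).symm
    simp only at he
    have h3 : A + s = A + s' := by rw [e1, he, ← e2]
    omega
  have h1 : (G.card : ℝ) = ((G.image (fun s => (A + s) / (N:ℤ))).card : ℝ) := by
    rw [Finset.card_image_of_injOn hinj]
  rw [h1]
  have := card_le_of_forall_mem_Icc (G.image (fun s => (A + s) / (N:ℤ)))
    (((A:ℝ) - S') / N) (((A:ℝ) + S') / N) ?_ ?_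
  · refine this.trans_eq ?_; field_simp; ring
  · have hS0 : (0:ℝ) ≤ (S':ℝ) := by exact_mod_cast hS'
    have h := div_le_div_of_nonneg_right (by linarith : ((A:ℝ) - S') ≤ ((A:ℝ) + S')) hN0.le
    linarith
  · intro n hn
    simp only [Finset.mem_image, hG, Finset.mem_filter, Finset.mem_Icc] at hn
    obtain ⟨s, ⟨⟨hs1, hs2⟩, hdvd⟩, rfl⟩ := hn
    have e : A + s = (N:ℤ) * ((A + s) / N) := (Int.mul_ediv_cancel' hdvd).symm
    constructor
    · rw [div_le_iff₀ hN0]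
      have : ((A:ℝ) + s) = (N:ℝ) * ((A + s) / (N:ℤ) : ℤ) := by exact_mod_cast congrArg Int.cast e
      have hs1' : (-(S':ℝ)) ≤ (s:ℝ) := by exact_mod_cast hs1
      push_cast at this ⊢
      linarith
    · rw [le_div_iff₀ hN0]
      have : ((A:ℝ) + s) = (N:ℝ) * ((A + s) / (N:ℤ) : ℤ) := by exact_mod_cast congrArg Int.cast e
      have hs2' : (s:ℝ) ≤ (S':ℝ) := by exact_mod_cast hs2
      push_cast at this ⊢
      linarith

lemma lemA (u N : ℕ) (hN : 0 < N) (a q : ℤ) (hq : 1 ≤ q) (hco : IsCoprime a q)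
    (H : ℝ) (hqH : (q:ℝ) ≤ H) (hHN : H ≤ (N:ℝ))
    (happ : |(u:ℝ)/N - (a:ℝ)/q| ≤ 1/(q*H)) (t' S' : ℤ) (hS' : 0 ≤ S') :
    (((Finset.Icc (0:ℤ) (q-1)).filter fun b => ∃ k : ℤ, |t' + (u:ℤ)*b - k*N| ≤ S').card : ℝ)
      ≤ 6*q*S'/N + 9 := by
  have hq0 : (0:ℤ) < q := by omega
  have hqR : (1:ℝ) ≤ (q:ℝ) := by exact_mod_cast hq
  have hqR0 : (0:ℝ) < (q:ℝ) := by linarith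
  have hH0 : (0:ℝ) < H := lt_of_lt_of_le hqR0 hqH
  have hN0 : (0:ℝ) < (N:ℝ) := by exact_mod_cast hN
  have hS'R : (0:ℝ) ≤ (S':ℝ) := by exact_mod_cast hS'
  set δ : ℝ := (S':ℝ)/N + 1/H with hδdef
  have hδ0 : 0 ≤ δ := by positivity
  clear_value δ
  set G := (Finset.Icc (0:ℤ) (q-1)).filter fun b => ∃ k : ℤ, |t' + (u:ℤ)*b - k*N| ≤ S'
    with hGdef
  set Pset := (Finset.Icc (0:ℤ) (q-1)).filter
    (fun ρ : ℤ => ∃ l : ℤ, |(ρ:ℝ)/q + (t':ℝ)/N - l| ≤ δ) with hPdef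
  -- step 1 : G.card ≤ Pset.card
  have hstep1 : G.card ≤ Pset.card := by
    have hinj : Set.InjOn (fun b => a*b % q) G := by
      intro b hb b' hb' he
      simp only [hGdef, Finset.coe_filter, Set.mem_setOf_eq, Finset.mem_Icc] at hb hb'
      simp only at he
      have hdvd : q ∣ a*b - a*b' := by
        have := Int.emod_eq_emod_iff_emod_sub_eq_zero.1 he
        exact Int.dvd_of_emod_eq_zero this
      have hdvd2 : q ∣ a * (b - b') := by rw [mul_sub]; exact hdvd
      have hdvd3 : q ∣ b - b' := (hco.symm).dvd_of_dvd_mul_left hdvd2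
      have : b - b' = 0 := Int.eq_zero_of_abs_lt_dvd hdvd3 (by
        rcases hb with ⟨⟨h1, h2⟩, _⟩; rcases hb' with ⟨⟨h3, h4⟩, _⟩
        rw [abs_lt]; omega)
      omega
    rw [← Finset.card_image_of_injOn hinj]
    apply Finset.card_le_card
    intro ρ hρ
    simp only [Finset.mem_image] at hρ
    obtain ⟨b, hb, rfl⟩ := hρ
    simp only [hGdef, Finset.mem_filter, Finset.mem_Icc] at hb
    obtain ⟨⟨hb0, hb1⟩, k, hk⟩ := hb
    simp only [hPdef, Finset.mem_filter, Finset.mem_Icc]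
    refine ⟨⟨Int.emod_nonneg _ (by omega), by have := Int.emod_lt_of_pos (a*b) hq0; omega⟩,
      k - a*b/q, ?_⟩
    set wZ : ℤ := a*b/q with hwZ
    set ρZ : ℤ := a*b % q with hρZ
    have hdm : (q:ℤ) * wZ + ρZ = a*b := Int.mul_ediv_add_emod (a*b) q
    have hdmR : (q:ℝ) * (wZ:ℝ) + (ρZ:ℝ) = (a:ℝ)*(b:ℝ) := by
      exact_mod_cast congrArg (Int.cast : ℤ → ℝ) hdm
    have hNne : ((N:ℝ)) ≠ 0 := ne_of_gt hN0
    have hqne : ((q:ℝ)) ≠ 0 := ne_of_gt hqR0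
    have key : ((ρZ : ℤ):ℝ)/q + (t':ℝ)/N - ((k - wZ : ℤ):ℝ)
        = ((t' + (u:ℤ)*b - k*N : ℤ):ℝ)/N - ((u:ℝ)/N - (a:ℝ)/q)*b := by
      push_cast
      field_simp
      linear_combination (N:ℝ) * hdmR
    rw [key]
    have h1 : |((t' + (u:ℤ)*b - k*N : ℤ):ℝ)/N| ≤ (S':ℝ)/N := by
      rw [abs_div, abs_of_pos hN0]
      have hk' : |((t' + (u:ℤ)*b - k*N : ℤ):ℝ)| ≤ (S':ℝ) := by
        rw [← Int.cast_abs]; exact_mod_cast hk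
      exact div_le_div_of_nonneg_right hk' hN0.le

    have hbR0 : (0:ℝ) ≤ (b:ℝ) := by exact_mod_cast hb0
    have hbRq : (b:ℝ) ≤ (q:ℝ) := by
      have : (b:ℤ) ≤ q := by omega
      exact_mod_cast this
    have h2 : |((u:ℝ)/N - (a:ℝ)/q)*b| ≤ 1/H := by
      rw [abs_mul, abs_of_nonneg hbR0]
      calc |(u:ℝ)/N - (a:ℝ)/q| * (b:ℝ) ≤ (1/(q*H)) * (q:ℝ) := by
            apply mul_le_mul happ hbRq hbR0 (by positivity)
        _ = 1/H := by field_simp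
    calc |((t' + (u:ℤ)*b - k*N : ℤ):ℝ)/N - ((u:ℝ)/N - (a:ℝ)/q)*b|
        ≤ |((t' + (u:ℤ)*b - k*N : ℤ):ℝ)/N| + |((u:ℝ)/N - (a:ℝ)/q)*b| := abs_sub _ _
      _ ≤ (S':ℝ)/N + 1/H := add_le_add h1 h2
      _ = δ := hδdef.symm
  -- step 2 : Pset.card bound
  have hqH1 : (q:ℝ)/H ≤ 1 := by rw [div_le_one hH0]; exact hqH
  have hstep2 : (Pset.card : ℝ) ≤ 6*q*S'/N + 9 := by
    rcases le_or_gt (1/2 : ℝ) δ with hδ | hδ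
    · -- δ large: trivial bound by q
      have h1 : (Pset.card : ℝ) ≤ ((Finset.Icc (0:ℤ) (q-1)).card : ℝ) := by
        exact_mod_cast Finset.card_le_card (Finset.filter_subset _ _)
      have h2 : ((Finset.Icc (0:ℤ) (q-1)).card : ℝ) ≤ (q:ℝ) := by
        have := card_le_of_forall_mem_Icc (Finset.Icc (0:ℤ) (q-1)) 0 ((q:ℝ)-1)
          (by linarith) (by
            intro n hn; simp only [Finset.mem_Icc] at hn
            constructor
            · exact_mod_cast hn.1
            · have : ((n:ℤ):ℝ) ≤ ((q-1 : ℤ):ℝ) := by exact_mod_cast hn.2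
              push_cast at this; linarith)
        linarith
      have h3 : (q:ℝ) ≤ 2*δ*q := by
        calc (q:ℝ) = 1*q := by ring
          _ ≤ (2*δ)*q := mul_le_mul_of_nonneg_right (by linarith) hqR0.le
          _ = 2*δ*q := by ring
      have h4 : 2*δ*q = 2*q*S'/N + 2*(q/H) := by rw [hδdef]; field_simp
      have h5 : (0:ℝ) ≤ q*S'/N := by positivity
      ring_nf at h4 h5 hqH1 ⊢
      linarith only [h1, h2, h3, h4, h5, hqH1]
    · -- δ < 1/2
      set y : ℝ := (t':ℝ)/N with hy
      clear_value y
      set L₁ : ℤ := ⌈y - 1/2⌉ with hL₁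
      set L₂ : ℤ := ⌊y + 3/2⌋ with hL₂
      have hsub : Pset ⊆ (Finset.Icc L₁ L₂).biUnion
          (fun l => Finset.Icc ⌈(q:ℝ)*((l:ℝ) - y) - q*δ⌉ ⌊(q:ℝ)*((l:ℝ) - y) + q*δ⌋) := by
        intro ρ hρ
        simp only [hPdef, Finset.mem_filter, Finset.mem_Icc] at hρ
        obtain ⟨⟨hρ0, hρ1⟩, l, hl⟩ := hρ
        have hρR0 : (0:ℝ) ≤ (ρ:ℝ) := by exact_mod_cast hρ0
        have hρRq : (ρ:ℝ) ≤ (q:ℝ) - 1 := by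
          have : ((ρ:ℤ):ℝ) ≤ ((q-1:ℤ):ℝ) := by exact_mod_cast hρ1
          push_cast at this; linarith
        have hx0 : (0:ℝ) ≤ (ρ:ℝ)/q := by positivity
        have hx1 : (ρ:ℝ)/q < 1 := by rw [div_lt_one hqR0]; linarith
        rw [abs_le] at hl
        apply Finset.mem_biUnion.2
        refine ⟨l, Finset.mem_Icc.2 ⟨?_, ?_⟩, Finset.mem_Icc.2 ⟨?_, ?_⟩⟩
        · rw [hL₁]; apply Int.ceil_le.2; linarith
        · rw [hL₂]; apply Int.le_floor.2; linarith
        · apply Int.ceil_le.2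
          have : (q:ℝ)*((l:ℝ) - y - δ) ≤ (q:ℝ)*((ρ:ℝ)/q) := by
            apply mul_le_mul_of_nonneg_left _ hqR0.le
            linarith
          rw [mul_div_cancel₀ _ (ne_of_gt hqR0)] at this
          linarith [this]
        · apply Int.le_floor.2
          have : (q:ℝ)*((ρ:ℝ)/q) ≤ (q:ℝ)*((l:ℝ) - y + δ) := by
            apply mul_le_mul_of_nonneg_left _ hqR0.le
            linarith
          rw [mul_div_cancel₀ _ (ne_of_gt hqR0)] at this
          linarith [this]
      have h1 : (Pset.card : ℝ) ≤ ∑ l ∈ Finset.Icc L₁ L₂,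
          ((Finset.Icc ⌈(q:ℝ)*((l:ℝ) - y) - q*δ⌉ ⌊(q:ℝ)*((l:ℝ) - y) + q*δ⌋).card : ℝ) := by
        have := (Finset.card_le_card hsub).trans Finset.card_biUnion_le
        exact_mod_cast this
      have h2 : ∀ l ∈ Finset.Icc L₁ L₂,
          ((Finset.Icc ⌈(q:ℝ)*((l:ℝ) - y) - q*δ⌉ ⌊(q:ℝ)*((l:ℝ) - y) + q*δ⌋).card : ℝ)
            ≤ 2*q*δ + 1 := by
        intro l _
        have := card_le_of_forall_mem_Icc
          (Finset.Icc ⌈(q:ℝ)*((l:ℝ) - y) - q*δ⌉ ⌊(q:ℝ)*((l:ℝ) - y) + q*δ⌋)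
          ((q:ℝ)*((l:ℝ) - y) - q*δ) ((q:ℝ)*((l:ℝ) - y) + q*δ)
          (by nlinarith) (by
            intro n hn; simp only [Finset.mem_Icc] at hn
            exact ⟨le_trans (Int.le_ceil _) (by exact_mod_cast hn.1),
              le_trans (by exact_mod_cast hn.2) (Int.floor_le _)⟩)
        linarith
      have h3 : ((Finset.Icc L₁ L₂).card : ℝ) ≤ 3 := by
        have := card_le_of_forall_mem_Icc (Finset.Icc L₁ L₂) (y - 1/2) (y + 3/2)
          (by linarith) (by
            intro n hn; simp only [Finset.mem_Icc] at hn
            exact ⟨le_trans (Int.le_ceil _) (by exact_mod_cast hn.1),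
              le_trans (by exact_mod_cast hn.2) (Int.floor_le _)⟩)
        linarith
      have h4 : (Pset.card : ℝ) ≤ ((Finset.Icc L₁ L₂).card : ℝ) * (2*q*δ + 1) := by
        refine h1.trans ?_
        calc ∑ l ∈ Finset.Icc L₁ L₂, ((Finset.Icc ⌈(q:ℝ)*((l:ℝ) - y) - q*δ⌉
              ⌊(q:ℝ)*((l:ℝ) - y) + q*δ⌋).card : ℝ)
            ≤ ∑ _l ∈ Finset.Icc L₁ L₂, (2*q*δ + 1) := Finset.sum_le_sum h2
          _ = ((Finset.Icc L₁ L₂).card : ℝ) * (2*q*δ + 1) := by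
              rw [Finset.sum_const, nsmul_eq_mul]
      have h5 : 2*q*δ + 1 = 2*q*S'/N + 2*(q/H) + 1 := by rw [hδdef]; field_simp
      have h6 : (0:ℝ) ≤ 2*q*δ + 1 := by positivity
      have h7 : (Pset.card : ℝ) ≤ 3 * (2*q*δ + 1) :=
        h4.trans (mul_le_mul_of_nonneg_right h3 h6)
      have h8 : (0:ℝ) ≤ q*S'/N := by positivity
      ring_nf at h5 h7 h8 hqH1 ⊢
      linarith only [h5, h7, hqH1, h8]
  calc (G.card : ℝ) ≤ (Pset.card : ℝ) := by exact_mod_cast hstep1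
    _ ≤ 6*q*S'/N + 9 := hstep2

lemma lemM (u N : ℕ) (hN : 0 < N) (a q : ℤ) (hq : 1 ≤ q) (hco : IsCoprime a q)
    (H : ℝ) (hqH : (q:ℝ) ≤ H) (hHN : H ≤ (N:ℝ))
    (happ : |(u:ℝ)/N - (a:ℝ)/q| ≤ 1/(q*H)) (t D' S' : ℤ) (hD' : 0 ≤ D') (hS' : 0 ≤ S') :
    (((Finset.Icc (-D') D').filter fun m => ∃ k : ℤ, |t + (u:ℤ)*m - k*N| ≤ S').card : ℝ)
      ≤ (2*(D':ℝ)/q + 2) * (6*q*S'/N + 9) := by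
  have hq0 : (0:ℤ) < q := by omega
  have hqR : (1:ℝ) ≤ (q:ℝ) := by exact_mod_cast hq
  have hqR0 : (0:ℝ) < (q:ℝ) := by linarith
  have hN0 : (0:ℝ) < (N:ℝ) := by exact_mod_cast hN
  have hS'R : (0:ℝ) ≤ (S':ℝ) := by exact_mod_cast hS'
  have hD'R : (0:ℝ) ≤ (D':ℝ) := by exact_mod_cast hD'
  set Mset := (Finset.Icc (-D') D').filter fun m => ∃ k : ℤ, |t + (u:ℤ)*m - k*N| ≤ S'
    with hMdef
  have key := card_le_card_mul_of_fiber Mset (fun m => m / q)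
    (Finset.Icc ((-D')/q) (D'/q)) ?_ (6*q*S'/N + 9) ?_
  · refine key.trans ?_
    apply mul_le_mul_of_nonneg_right _ (by positivity)
    have hD'q : (0:ℝ) ≤ (D':ℝ)/q := by positivity
    have hcard := card_le_of_forall_mem_Icc (Finset.Icc ((-D')/q) (D'/q))
      (-((D':ℝ)/q) - 1) ((D':ℝ)/q) (by linarith) ?_
    · ring_nf at hcard ⊢
      linarith
    · intro n hn
      simp only [Finset.mem_Icc] at hn
      constructor
      · have h1 : -D' < ((-D')/q) * q + q := by
          calc -D' < ((-D')/q + 1) * q := Int.lt_ediv_add_one_mul_self _ hq0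
            _ = ((-D')/q) * q + q := by ring
        have h1R : (-(D':ℝ)) < ((((-D')/q : ℤ)):ℝ) * (q:ℝ) + (q:ℝ) := by
          exact_mod_cast h1
        have h2R : ((((-D')/q : ℤ)):ℝ) ≤ (n:ℝ) := by exact_mod_cast hn.1
        have hstep : (-(D':ℝ) - q)/q < ((((-D')/q : ℤ)):ℝ) := by
          rw [div_lt_iff₀ hqR0]; linarith
        have heq : -((D':ℝ)/q) - 1 = (-(D':ℝ) - q)/q := by field_simp
        linarith
      · have h1 : (D'/q) * q ≤ D' := Int.ediv_mul_le _ hq0.ne'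
        have h1R : (((D'/q : ℤ)):ℝ) * (q:ℝ) ≤ (D':ℝ) := by exact_mod_cast h1
        have h2R : (n:ℝ) ≤ (((D'/q : ℤ)):ℝ) := by exact_mod_cast hn.2
        have hstep : (((D'/q : ℤ)):ℝ) ≤ (D':ℝ)/q := by
          rw [le_div_iff₀ hqR0]; linarith
        linarith
  · intro m hm
    simp only [hMdef, Finset.mem_filter, Finset.mem_Icc] at hm
    exact Finset.mem_Icc.2 ⟨Int.ediv_le_ediv hq0 hm.1.1, Int.ediv_le_ediv hq0 hm.1.2⟩
  · intro j hj
    have hinj : Set.InjOn (fun m => m % q) (Mset.filter fun m => m / q = j) := by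
      intro m hm m' hm' he
      simp only [Finset.coe_filter, Set.mem_setOf_eq] at hm hm'
      simp only at he
      have e1 : q * (m / q) + m % q = m := Int.mul_ediv_add_emod m q
      have e2 : q * (m' / q) + m' % q = m' := Int.mul_ediv_add_emod m' q
      rw [hm.2, hm'.2] at *
      omega
    have h1 : ((Mset.filter fun m => m / q = j).card : ℝ)
        = (((Mset.filter fun m => m / q = j).image (fun m => m % q)).card : ℝ) := by
      rw [Finset.card_image_of_injOn hinj]
    rw [h1]
    have hsub : (Mset.filter fun m => m / q = j).image (fun m => m % q)
        ⊆ (Finset.Icc (0:ℤ) (q-1)).filter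
            fun b => ∃ k : ℤ, |(t + (u:ℤ)*q*j) + (u:ℤ)*b - k*N| ≤ S' := by
      intro b hb
      simp only [Finset.mem_image] at hb
      obtain ⟨m, hm, rfl⟩ := hb
      simp only [hMdef, Finset.mem_filter, Finset.mem_Icc] at hm
      obtain ⟨⟨⟨hm1, hm2⟩, k, hk⟩, hj'⟩ := hm
      have e1 : q * (m / q) + m % q = m := Int.mul_ediv_add_emod m q
      refine Finset.mem_filter.2 ⟨Finset.mem_Icc.2
        ⟨Int.emod_nonneg _ (by omega), by have := Int.emod_lt_of_pos m hq0; omega⟩, k, ?_⟩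
      have : t + (u:ℤ)*q*j + (u:ℤ)*(m % q) = t + (u:ℤ)*m := by
        rw [← hj']; nlinarith [e1]
      rw [this]; exact hk
    have h2 := Finset.card_le_card hsub
    have h3 := lemA u N hN a q hq hco H hqH hHN happ (t + (u:ℤ)*q*j) S' hS'
    calc ((((Mset.filter fun m => m / q = j).image (fun m => m % q))).card : ℝ)
        ≤ (((Finset.Icc (0:ℤ) (q-1)).filter
            fun b => ∃ k : ℤ, |(t + (u:ℤ)*q*j) + (u:ℤ)*b - k*N| ≤ S').card : ℝ) := by
          exact_mod_cast h2
      _ ≤ 6*q*S'/N + 9 := h3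

set_option maxHeartbeats 6000000 in
lemma aux_count (C S R₁ R₂ : ℝ) (hC : 1 ≤ C) (hS : 1 ≤ S) (hR₁ : 1 ≤ R₁) (hR₂ : 1 ≤ R₂)
    (u N d₁ d₂ : ℕ) (hu : 0 < u) (hN : 0 < N) (hd₁ : 0 < d₁) (hd₂ : 0 < d₂)
    (a q : ℤ) (H : ℝ) (hco : IsCoprime a q) (hq : 1 ≤ q) (hqH : (q:ℝ) ≤ H) (hHN : H ≤ (N:ℝ))
    (happ : |(u:ℝ)/N - (a:ℝ)/q| ≤ 1/(q*H)) :
    (Set.ncard {x : ℤ × ℤ × ℤ × ℤ |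
        C ≤ x.1 ∧ (x.1 : ℝ) < 2 * C ∧
        |(x.2.1 : ℝ)| ≤ S ∧ |(x.2.2.1 : ℝ)| ≤ R₁ ∧ |(x.2.2.2 : ℝ)| ≤ R₂ ∧
        (N : ℤ) ∣ (u : ℤ) ^ 2 * d₁ * d₂ * x.1 +
          (u : ℤ) * (d₁ * x.2.2.2 + d₂ * x.2.2.1) + x.2.1} : ℝ)
      ≤ 216 * C * R₁ *
        (S * (d₁ * R₂ + d₂ * R₁) / N + S * q / N + (d₁ * R₂ + d₂ * R₁) / q + 1) := by
  have hq0 : (0:ℤ) < q := by omega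
  have hqR : (1:ℝ) ≤ (q:ℝ) := by exact_mod_cast hq
  have hqR0 : (0:ℝ) < (q:ℝ) := by linarith
  have hN0 : (0:ℝ) < (N:ℝ) := by exact_mod_cast hN
  have hd₁R : (1:ℝ) ≤ (d₁:ℝ) := by exact_mod_cast hd₁
  have hd₂R : (1:ℝ) ≤ (d₂:ℝ) := by exact_mod_cast hd₂
  set S' : ℤ := ⌊S⌋ with hS'def
  set R₁' : ℤ := ⌊R₁⌋ with hR₁'def
  set R₂' : ℤ := ⌊R₂⌋ with hR₂'def
  set Cl : ℤ := ⌈C⌉ with hCldef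
  set Cu : ℤ := ⌊2*C⌋ with hCudef
  set D' : ℤ := (d₁:ℤ)*R₂' + (d₂:ℤ)*R₁' with hD'def
  have hS'1 : (1:ℤ) ≤ S' := by rw [hS'def]; exact Int.le_floor.2 (by exact_mod_cast hS)
  have hR₁'1 : (1:ℤ) ≤ R₁' := by rw [hR₁'def]; exact Int.le_floor.2 (by exact_mod_cast hR₁)
  have hR₂'1 : (1:ℤ) ≤ R₂' := by rw [hR₂'def]; exact Int.le_floor.2 (by exact_mod_cast hR₂)
  have hS'le : ((S':ℤ):ℝ) ≤ S := Int.floor_le S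
  have hR₁'le : ((R₁':ℤ):ℝ) ≤ R₁ := Int.floor_le R₁
  have hR₂'le : ((R₂':ℤ):ℝ) ≤ R₂ := Int.floor_le R₂
  have hD'0 : (0:ℤ) ≤ D' := by positivity
  set DR : ℝ := (d₁:ℝ)*R₂ + (d₂:ℝ)*R₁ with hDRdef
  have hDR2 : (2:ℝ) ≤ DR := by
    rw [hDRdef]; nlinarith
  have hD'le : ((D':ℤ):ℝ) ≤ DR := by
    rw [hD'def, hDRdef]; push_cast
    have h1 : (d₁:ℝ)*(R₂':ℝ) ≤ (d₁:ℝ)*R₂ := by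
      apply mul_le_mul_of_nonneg_left hR₂'le (by positivity)
    have h2 : (d₂:ℝ)*(R₁':ℝ) ≤ (d₂:ℝ)*R₁ := by
      apply mul_le_mul_of_nonneg_left hR₁'le (by positivity)
    linarith
  set box : Finset (ℤ × ℤ × ℤ × ℤ) := (Finset.Icc Cl Cu) ×ˢ (Finset.Icc (-S') S')
    ×ˢ (Finset.Icc (-R₁') R₁') ×ˢ (Finset.Icc (-R₂') R₂') with hboxdef
  set F : Finset (ℤ × ℤ × ℤ × ℤ) := box.filter
    (fun x => (N:ℤ) ∣ (u:ℤ)^2*d₁*d₂*x.1 + (u:ℤ)*(d₁*x.2.2.2 + d₂*x.2.2.1) + x.2.1)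
    with hFdef
  clear_value F
  clear_value box
  -- the set is contained in F
  have hsubF : {x : ℤ × ℤ × ℤ × ℤ |
      C ≤ x.1 ∧ (x.1 : ℝ) < 2 * C ∧
      |(x.2.1 : ℝ)| ≤ S ∧ |(x.2.2.1 : ℝ)| ≤ R₁ ∧ |(x.2.2.2 : ℝ)| ≤ R₂ ∧
      (N : ℤ) ∣ (u : ℤ) ^ 2 * d₁ * d₂ * x.1 +
        (u : ℤ) * (d₁ * x.2.2.2 + d₂ * x.2.2.1) + x.2.1} ⊆ (F : Set (ℤ × ℤ × ℤ × ℤ)) := by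
    intro x hx
    obtain ⟨h1, h2, h3, h4, h5, h6⟩ := hx
    rw [abs_le] at h3 h4 h5
    simp only [hFdef, hboxdef, Finset.coe_filter, Set.mem_setOf_eq, Finset.mem_product,
      Finset.mem_Icc]
    refine ⟨⟨⟨?_, ?_⟩, ⟨?_, ?_⟩, ⟨?_, ?_⟩, ?_, ?_⟩, h6⟩
    · exact Int.ceil_le.2 h1
    · exact Int.le_floor.2 h2.le
    · rw [neg_le]; exact Int.le_floor.2 (by push_cast; linarith [h3.1])
    · exact Int.le_floor.2 h3.2
    · rw [neg_le]; exact Int.le_floor.2 (by push_cast; linarith [h4.1])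
    · exact Int.le_floor.2 h4.2
    · rw [neg_le]; exact Int.le_floor.2 (by push_cast; linarith [h5.1])
    · exact Int.le_floor.2 h5.2
  have hncard : (Set.ncard {x : ℤ × ℤ × ℤ × ℤ |
      C ≤ x.1 ∧ (x.1 : ℝ) < 2 * C ∧
      |(x.2.1 : ℝ)| ≤ S ∧ |(x.2.2.1 : ℝ)| ≤ R₁ ∧ |(x.2.2.2 : ℝ)| ≤ R₂ ∧
      (N : ℤ) ∣ (u : ℤ) ^ 2 * d₁ * d₂ * x.1 +
        (u : ℤ) * (d₁ * x.2.2.2 + d₂ * x.2.2.1) + x.2.1} : ℝ) ≤ (F.card : ℝ) := by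
    have := Set.ncard_le_ncard hsubF F.finite_toSet
    rw [Set.ncard_coe_finset] at this
    exact_mod_cast this
  refine hncard.trans ?_
  -- cardinality bounds for basic intervals
  have hcardC : ((Finset.Icc Cl Cu).card : ℝ) ≤ 2*C := by
    have := card_le_of_forall_mem_Icc (Finset.Icc Cl Cu) C (2*C) (by linarith) ?_
    · linarith
    · intro n hn
      simp only [Finset.mem_Icc] at hn
      constructor
      · calc C ≤ ((Cl:ℤ):ℝ) := Int.le_ceil C
          _ ≤ (n:ℝ) := by exact_mod_cast hn.1
      · calc (n:ℝ) ≤ ((Cu:ℤ):ℝ) := by exact_mod_cast hn.2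
          _ ≤ 2*C := Int.floor_le _
  have hcardR₁ : ((Finset.Icc (-R₁') R₁').card : ℝ) ≤ 3*R₁ := by
    have := card_le_of_forall_mem_Icc (Finset.Icc (-R₁') R₁') (-R₁) R₁ (by linarith) ?_
    · linarith
    · intro n hn
      simp only [Finset.mem_Icc] at hn
      constructor
      · calc -R₁ ≤ -((R₁':ℤ):ℝ) := by linarith
          _ ≤ (n:ℝ) := by exact_mod_cast hn.1
      · calc (n:ℝ) ≤ ((R₁':ℤ):ℝ) := by exact_mod_cast hn.2
          _ ≤ R₁ := hR₁'le
  have hcardR₂ : ((Finset.Icc (-R₂') R₂').card : ℝ) ≤ 3*R₂ := by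
    have := card_le_of_forall_mem_Icc (Finset.Icc (-R₂') R₂') (-R₂) R₂ (by linarith) ?_
    · linarith
    · intro n hn
      simp only [Finset.mem_Icc] at hn
      constructor
      · calc -R₂ ≤ -((R₂':ℤ):ℝ) := by linarith
          _ ≤ (n:ℝ) := by exact_mod_cast hn.1
      · calc (n:ℝ) ≤ ((R₂':ℤ):ℝ) := by exact_mod_cast hn.2
          _ ≤ R₂ := hR₂'le
  have hparen0 : (0:ℝ) ≤ S * DR / N + S * q / N + DR / q + 1 := by positivity
  rcases le_or_gt (N:ℝ) S with hNS | hNS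
  · -- Case A : N ≤ S, crude bound
    have hB : ∀ j ∈ (Finset.Icc Cl Cu) ×ˢ (Finset.Icc (-R₁') R₁') ×ˢ (Finset.Icc (-R₂') R₂'),
        ((F.filter fun x => (x.1, x.2.2.1, x.2.2.2) = j).card : ℝ) ≤ 2*(S':ℝ)/N + 1 := by
      rintro ⟨c, r₁, r₂⟩ _
      set A : ℤ := (u:ℤ)^2*d₁*d₂*c + (u:ℤ)*(d₁*r₂ + d₂*r₁) with hAdef
      have hinj : Set.InjOn (fun x : ℤ×ℤ×ℤ×ℤ => x.2.1)
          (F.filter fun x => (x.1, x.2.2.1, x.2.2.2) = (c, r₁, r₂)) := by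
        rintro ⟨x1,x2,x3,x4⟩ hx ⟨y1,y2,y3,y4⟩ hy he
        simp only [Finset.coe_filter, Set.mem_setOf_eq, Prod.mk.injEq] at hx hy
        simp only at he
        obtain ⟨-, hx1, hx3, hx4⟩ := hx
        obtain ⟨-, hy1, hy3, hy4⟩ := hy
        simp only [Prod.mk.injEq]
        exact ⟨hx1.trans hy1.symm, he, hx3.trans hy3.symm, hx4.trans hy4.symm⟩
      have hmaps : ∀ x ∈ F.filter fun x : ℤ×ℤ×ℤ×ℤ => (x.1, x.2.2.1, x.2.2.2) = (c, r₁, r₂),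
          x.2.1 ∈ (Finset.Icc (-S') S').filter fun s => (N:ℤ) ∣ (A + s) := by
        rintro ⟨x1,x2,x3,x4⟩ hx
        simp only [hFdef, hboxdef, Finset.mem_filter, Finset.mem_product, Finset.mem_Icc,
          Prod.mk.injEq] at hx
        obtain ⟨⟨⟨-, hs, -, -⟩, hdvd⟩, hx1, hx3, hx4⟩ := hx
        subst hx1; subst hx3; subst hx4
        refine Finset.mem_filter.2 ⟨Finset.mem_Icc.2 hs, ?_⟩
        rw [hAdef]
        exact hdvd
      have hcle := Finset.card_le_card_of_injOn _ hmaps hinj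
      calc ((F.filter fun x => (x.1, x.2.2.1, x.2.2.2) = (c, r₁, r₂)).card : ℝ)
          ≤ (((Finset.Icc (-S') S').filter fun s => (N:ℤ) ∣ (A + s)).card : ℝ) := by
            exact_mod_cast hcle
        _ ≤ 2*(S':ℝ)/N + 1 := card_dvd_filter_le N hN A S' (by omega)
    have hmain := card_le_card_mul_of_fiber F (fun x => (x.1, x.2.2.1, x.2.2.2))
      ((Finset.Icc Cl Cu) ×ˢ (Finset.Icc (-R₁') R₁') ×ˢ (Finset.Icc (-R₂') R₂')) ?_
      (2*(S':ℝ)/N + 1) hB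
    · refine hmain.trans ?_
      have hcards : ((((Finset.Icc Cl Cu) ×ˢ (Finset.Icc (-R₁') R₁')
          ×ˢ (Finset.Icc (-R₂') R₂')).card) : ℝ)
          = ((Finset.Icc Cl Cu).card : ℝ) * ((Finset.Icc (-R₁') R₁').card : ℝ)
            * ((Finset.Icc (-R₂') R₂').card : ℝ) := by
        rw [Finset.card_product, Finset.card_product]; push_cast; ring
      rw [hcards]
      have hBle : 2*(S':ℝ)/N + 1 ≤ 3*S/N := by
        have h1 : (1:ℝ) ≤ S/N := by rw [le_div_iff₀ hN0]; linarith
        have h2 : 2*(S':ℝ)/N ≤ 2*S/N := by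
          apply div_le_div_of_nonneg_right _ hN0.le
          linarith
        have h3 : 2*S/N + S/N = 3*S/N := by ring
        linarith
      have hstep : ((Finset.Icc Cl Cu).card : ℝ) * ((Finset.Icc (-R₁') R₁').card : ℝ)
          * ((Finset.Icc (-R₂') R₂').card : ℝ) * (2*(S':ℝ)/N + 1)
          ≤ (2*C) * (3*R₁) * (3*R₂) * (3*S/N) := by
        apply mul_le_mul (by
          apply mul_le_mul (by
            apply mul_le_mul hcardC hcardR₁ (by positivity) (by linarith)) hcardR₂
            (by positivity) (by positivity)) hBle (by positivity) (by positivity)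
      refine hstep.trans ?_
      have hR₂DR : R₂ ≤ DR := by rw [hDRdef]; nlinarith
      have hfin : (2*C) * (3*R₁) * (3*R₂) * (3*S/N) ≤ 216 * C * R₁ * (S * DR / N) := by
        have e1 : (2*C) * (3*R₁) * (3*R₂) * (3*S/N) = 54 * C * R₁ * (S * R₂ / N) := by
          ring
        have e2 : S * R₂ / N ≤ S * DR / N := by
          apply div_le_div_of_nonneg_right _ hN0.le
          nlinarith
        have e3 : (0:ℝ) ≤ C * R₁ := by positivity
        have e4 : (0:ℝ) ≤ S * DR / N := by positivity
        rw [e1]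
        nlinarith
      refine hfin.trans ?_
      have hrest : (0:ℝ) ≤ S * q / N + DR / q + 1 := by positivity
      nlinarith [hrest, (by positivity : (0:ℝ) ≤ C * R₁)]
    · intro x hx
      simp only [hFdef, hboxdef, Finset.mem_filter, Finset.mem_product, Finset.mem_Icc] at hx
      simp only [Finset.mem_product, Finset.mem_Icc]
      exact ⟨hx.1.1, hx.1.2.2.1, hx.1.2.2.2⟩
  · -- Case B : S < N
    set MB : ℝ := (2*(D':ℝ)/q + 2) * (6*q*(S':ℝ)/N + 9) with hMBdef
    have hMB0 : (0:ℝ) ≤ MB := by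
      rw [hMBdef]
      have : (0:ℝ) ≤ (D':ℝ) := by exact_mod_cast hD'0
      have : (0:ℝ) ≤ (S':ℝ) := by
        have : (0:ℤ) ≤ S' := by omega
        exact_mod_cast this
      positivity
    set B₁ : ℝ := MB * (3*R₁) * 2 with hB₁def
    have hB₁0 : (0:ℝ) ≤ B₁ := by rw [hB₁def]; positivity
    have hBc : ∀ c ∈ Finset.Icc Cl Cu,
        ((F.filter fun x : ℤ×ℤ×ℤ×ℤ => x.1 = c).card : ℝ) ≤ B₁ := by
      intro c _
      set t : ℤ := (u:ℤ)^2*d₁*d₂*c with htdef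
      set Msetc : Finset ℤ := (Finset.Icc (-D') D').filter
        (fun m => ∃ k : ℤ, |t + (u:ℤ)*m - k*(N:ℤ)| ≤ S') with hMsetdef
      set Fc : Finset (ℤ×ℤ×ℤ×ℤ) := F.filter (fun x => x.1 = c) with hFcdef
      clear_value Fc
      clear_value Msetc
      -- fibers over (m, r₁) have at most 2 elements
      have hfib : ∀ j ∈ Msetc ×ˢ (Finset.Icc (-R₁') R₁'),
          ((Fc.filter fun x : ℤ×ℤ×ℤ×ℤ =>
            ((d₁:ℤ)*x.2.2.2 + (d₂:ℤ)*x.2.2.1, x.2.2.1) = j).card : ℝ) ≤ 2 := by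
        rintro ⟨m, r₁⟩ _
        set SS : Finset ℤ := (Finset.Icc (-S') S').filter
          (fun s => (N:ℤ) ∣ (t + (u:ℤ)*m + s)) with hSSdef
        clear_value SS
        have hinj : Set.InjOn (fun x : ℤ×ℤ×ℤ×ℤ => x.2.1)
            (Fc.filter fun x => ((d₁:ℤ)*x.2.2.2 + (d₂:ℤ)*x.2.2.1, x.2.2.1) = (m, r₁)) := by
          rintro ⟨x1,x2,x3,x4⟩ hx ⟨y1,y2,y3,y4⟩ hy he
          simp only [hFcdef, Finset.coe_filter, Set.mem_setOf_eq, Finset.mem_filter,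
            Prod.mk.injEq] at hx hy
          simp only at he
          obtain ⟨⟨-, hx1⟩, hxm, hx3⟩ := hx
          obtain ⟨⟨-, hy1⟩, hym, hy3⟩ := hy
          simp only [Prod.mk.injEq]
          refine ⟨hx1.trans hy1.symm, he, hx3.trans hy3.symm, ?_⟩
          have hd₁0 : ((d₁:ℤ)) ≠ 0 := by exact_mod_cast hd₁.ne'
          have : (d₁:ℤ)*x4 = (d₁:ℤ)*y4 := by
            have e1 : (d₁:ℤ)*x4 = m - (d₂:ℤ)*r₁ := by rw [← hxm, hx3]; ring
            have e2 : (d₁:ℤ)*y4 = m - (d₂:ℤ)*r₁ := by rw [← hym, hy3]; ring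
            rw [e1, e2]
          exact mul_left_cancel₀ hd₁0 this
        have hmaps : ∀ x ∈ Fc.filter
            (fun x : ℤ×ℤ×ℤ×ℤ => ((d₁:ℤ)*x.2.2.2 + (d₂:ℤ)*x.2.2.1, x.2.2.1) = (m, r₁)),
            x.2.1 ∈ SS := by
          rintro ⟨x1,x2,x3,x4⟩ hx
          simp only [hFcdef, hFdef, hboxdef, Finset.mem_filter, Finset.mem_product,
            Finset.mem_Icc, Prod.mk.injEq] at hx
          obtain ⟨⟨⟨⟨-, hs, -, -⟩, hdvd⟩, hx1⟩, hxm, -⟩ := hx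
          rw [hSSdef]
          refine Finset.mem_filter.2 ⟨Finset.mem_Icc.2 hs, ?_⟩
          have : t + (u:ℤ)*m + x2
              = (u:ℤ)^2*d₁*d₂*x1 + (u:ℤ)*((d₁:ℤ)*x4 + (d₂:ℤ)*x3) + x2 := by
            rw [htdef, hx1, ← hxm]
          rw [this]
          exact hdvd
        have hcle := Finset.card_le_card_of_injOn _ hmaps hinj
        have hSS : (SS.card : ℝ) ≤ 2*(S':ℝ)/N + 1 := by
          rw [hSSdef]
          exact card_dvd_filter_le N hN (t + (u:ℤ)*m) S' (by omega)
        have hSSlt : (SS.card : ℝ) < 3 := by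
          have hS'S : ((S':ℤ):ℝ) < (N:ℝ) := by linarith
          have : 2*(S':ℝ)/N < 2 := by
            rw [div_lt_iff₀ hN0]; linarith
          linarith
        have hSS2 : SS.card ≤ 2 := by
          have : SS.card < 3 := by exact_mod_cast hSSlt
          omega
        calc ((Fc.filter fun x : ℤ×ℤ×ℤ×ℤ =>
              ((d₁:ℤ)*x.2.2.2 + (d₂:ℤ)*x.2.2.1, x.2.2.1) = (m, r₁)).card : ℝ)
            ≤ (SS.card : ℝ) := by exact_mod_cast hcle
          _ ≤ 2 := by exact_mod_cast hSS2
      have hJmap : ∀ x ∈ Fc, ((d₁:ℤ)*x.2.2.2 + (d₂:ℤ)*x.2.2.1, x.2.2.1)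
          ∈ Msetc ×ˢ (Finset.Icc (-R₁') R₁') := by
        rintro ⟨x1,x2,x3,x4⟩ hx
        simp only [hFcdef, hFdef, hboxdef, Finset.mem_filter, Finset.mem_product,
          Finset.mem_Icc] at hx
        obtain ⟨⟨⟨-, hs, hr₁, hr₂⟩, hdvd⟩, hx1⟩ := hx
        simp only [Finset.mem_product, hMsetdef, Finset.mem_filter, Finset.mem_Icc]
        refine ⟨⟨?_, ?_⟩, hr₁⟩
        · have hd₁0 : (0:ℤ) ≤ (d₁:ℤ) := by positivity
          have hd₂0 : (0:ℤ) ≤ (d₂:ℤ) := by positivity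
          have h1 := mul_le_mul_of_nonneg_left hr₂.1 hd₁0
          have h2 := mul_le_mul_of_nonneg_left hr₂.2 hd₁0
          have h3 := mul_le_mul_of_nonneg_left hr₁.1 hd₂0
          have h4 := mul_le_mul_of_nonneg_left hr₁.2 hd₂0
          rw [hD'def]
          constructor <;> linarith
        · obtain ⟨k, hk⟩ := hdvd
          refine ⟨k, ?_⟩
          have : t + (u:ℤ)*((d₁:ℤ)*x4 + (d₂:ℤ)*x3) - k*(N:ℤ) = -x2 := by
            rw [hx1] at hk
            rw [htdef]
            linear_combination hk
          rw [this, abs_neg]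
          exact abs_le.2 hs
      have hlev2 := card_le_card_mul_of_fiber Fc
        (fun x : ℤ×ℤ×ℤ×ℤ => ((d₁:ℤ)*x.2.2.2 + (d₂:ℤ)*x.2.2.1, x.2.2.1))
        (Msetc ×ˢ (Finset.Icc (-R₁') R₁')) hJmap 2 hfib
      refine hlev2.trans ?_
      have hM : (Msetc.card : ℝ) ≤ (2*(D':ℝ)/q + 2) * (6*q*(S':ℝ)/N + 9) := by
        rw [hMsetdef]
        exact lemM u N hN a q hq hco H hqH hHN happ t D' S' hD'0 (by omega)
      have hcards : (((Msetc ×ˢ (Finset.Icc (-R₁') R₁')).card : ℕ) : ℝ)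
          = (Msetc.card : ℝ) * ((Finset.Icc (-R₁') R₁').card : ℝ) := by
        rw [Finset.card_product]; push_cast; ring
      rw [hcards, hB₁def, hMBdef]
      have h1 : (Msetc.card : ℝ) ≤ (2*(D':ℝ)/q + 2) * (6*q*(S':ℝ)/N + 9) := hM
      have h2 : ((Finset.Icc (-R₁') R₁').card : ℝ) ≤ 3*R₁ := hcardR₁
      have h3 : (0:ℝ) ≤ (2*(D':ℝ)/q + 2) * (6*q*(S':ℝ)/N + 9) := by
        have e1 : (0:ℝ) ≤ (D':ℝ) := by exact_mod_cast hD'0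
        have e2 : (0:ℝ) ≤ (S':ℝ) := by
          have : (0:ℤ) ≤ S' := by omega
          exact_mod_cast this
        positivity
      have := mul_le_mul h1 h2 (Nat.cast_nonneg _) h3
      nlinarith [this]
    have hlev1 := card_le_card_mul_of_fiber F (fun x : ℤ×ℤ×ℤ×ℤ => x.1)
      (Finset.Icc Cl Cu) ?_ B₁ hBc
    · refine hlev1.trans ?_
      have hstep : ((Finset.Icc Cl Cu).card : ℝ) * B₁ ≤ (2*C) * B₁ :=
        mul_le_mul_of_nonneg_right hcardC hB₁0
      refine hstep.trans ?_
      -- now pure arithmetic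
      have hS'0 : (0:ℝ) ≤ (S':ℝ) := by
        have : (0:ℤ) ≤ S' := by omega
        exact_mod_cast this
      have hD'0R : (0:ℝ) ≤ (D':ℝ) := by exact_mod_cast hD'0
      have hMB1 : MB ≤ (2*DR/q + 2) * (6*q*S/N + 9) := by
        rw [hMBdef]
        apply mul_le_mul
        · have : (2*(D':ℝ)/q) ≤ 2*DR/q := by
            apply div_le_div_of_nonneg_right _ hqR0.le
            linarith
          linarith
        · have : (6*q*(S':ℝ)/N) ≤ 6*q*S/N := by
            apply div_le_div_of_nonneg_right _ hN0.le
            nlinarith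
          linarith
        · positivity
        · positivity
      have hexp : (2*DR/q + 2) * (6*q*S/N + 9)
          = 12*(DR*S/N) + 18*(DR/q) + 12*(q*S/N) + 18 := by
        field_simp
        ring
      have hcmp : (2*DR/q + 2) * (6*q*S/N + 9)
          ≤ 18 * (S * DR / N + S * q / N + DR / q + 1) := by
        rw [hexp]
        have m1 : (0:ℝ) ≤ DR*S/N := by positivity
        have m2 : (0:ℝ) ≤ q*S/N := by positivity
        ring_nf
        ring_nf at m1 m2
        linarith
      have hB₁le : B₁ ≤ (18 * (S * DR / N + S * q / N + DR / q + 1)) * (3*R₁) * 2 := by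
        rw [hB₁def]
        have := hMB1.trans hcmp
        nlinarith [this, (by positivity : (0:ℝ) ≤ 3*R₁)]
      calc (2*C) * B₁ ≤ (2*C) * ((18 * (S * DR / N + S * q / N + DR / q + 1)) * (3*R₁) * 2) := by
            apply mul_le_mul_of_nonneg_left hB₁le (by linarith)
        _ = 216 * C * R₁ * (S * DR / N + S * q / N + DR / q + 1) := by ring
    · intro x hx
      simp only [hFdef, hboxdef, Finset.mem_filter, Finset.mem_product, Finset.mem_Icc] at hx
      exact Finset.mem_Icc.2 hx.1.1

open Set

theorem congruence_count :
    ∃ K : ℝ, 0 < K ∧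
      ∀ (C S R₁ R₂ : ℝ), 1 ≤ C → 1 ≤ S → 1 ≤ R₁ → 1 ≤ R₂ →
      ∀ (u N d₁ d₂ : ℕ), 0 < u → 0 < N → 0 < d₁ → 0 < d₂ →
      ∀ (a q : ℤ) (H : ℝ), IsCoprime a q → 1 ≤ q → (q : ℝ) ≤ H → H ≤ N →
      |(u : ℝ) / N - (a : ℝ) / q| ≤ 1 / (q * H) →
      (Set.ncard {x : ℤ × ℤ × ℤ × ℤ |
          C ≤ x.1 ∧ (x.1 : ℝ) < 2 * C ∧
          |(x.2.1 : ℝ)| ≤ S ∧ |(x.2.2.1 : ℝ)| ≤ R₁ ∧ |(x.2.2.2 : ℝ)| ≤ R₂ ∧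
          (N : ℤ) ∣ (u : ℤ) ^ 2 * d₁ * d₂ * x.1 +
            (u : ℤ) * (d₁ * x.2.2.2 + d₂ * x.2.2.1) + x.2.1} : ℝ)
        ≤ K * C * min R₁ R₂ *
          (S * (d₁ * R₂ + d₂ * R₁) / N + S * q / N +
            (d₁ * R₂ + d₂ * R₁) ^ 2 / (q * H) + (d₁ * R₂ + d₂ * R₁) / q + 1) := by
  refine ⟨216, by norm_num, ?_⟩
  intro C S R₁ R₂ hC hS hR₁ hR₂ u N d₁ d₂ hu hN hd₁ hd₂ a q H hco hq hqH hHN happ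
  have hqR : (1:ℝ) ≤ (q:ℝ) := by exact_mod_cast hq
  have hH0 : (0:ℝ) < H := by linarith
  have hN0 : (0:ℝ) < (N:ℝ) := by exact_mod_cast hN
  have hqR0 : (0:ℝ) < (q:ℝ) := by linarith
  have hextra : (0:ℝ) ≤ ((d₁:ℝ) * R₂ + (d₂:ℝ) * R₁) ^ 2 / (q * H) := by positivity
  rcases le_total R₁ R₂ with hmin | hmin
  · rw [min_eq_left hmin]
    have h := aux_count C S R₁ R₂ hC hS hR₁ hR₂ u N d₁ d₂ hu hN hd₁ hd₂ a q H hco hq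
      hqH hHN happ
    refine h.trans ?_
    have h0 : (0:ℝ) ≤ 216 * C * R₁ := by positivity
    nlinarith [mul_le_mul_of_nonneg_left (by linarith :
      S * ((d₁:ℝ) * R₂ + (d₂:ℝ) * R₁) / N + S * q / N + ((d₁:ℝ) * R₂ + (d₂:ℝ) * R₁) / q + 1
        ≤ S * ((d₁:ℝ) * R₂ + (d₂:ℝ) * R₁) / N + S * q / N +
          ((d₁:ℝ) * R₂ + (d₂:ℝ) * R₁) ^ 2 / (q * H) +
          ((d₁:ℝ) * R₂ + (d₂:ℝ) * R₁) / q + 1) h0]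
  · rw [min_eq_right hmin]
    have h := aux_count C S R₂ R₁ hC hS hR₂ hR₁ u N d₂ d₁ hu hN hd₂ hd₁ a q H hco hq
      hqH hHN happ
    set sw : ℤ × ℤ × ℤ × ℤ → ℤ × ℤ × ℤ × ℤ :=
      fun x => (x.1, x.2.1, x.2.2.2, x.2.2.1) with hswdef
    have hswinv : Function.Involutive sw := fun x => rfl
    have hswinj : Function.Injective sw := hswinv.injective
    have himg : sw '' {x : ℤ × ℤ × ℤ × ℤ |
        C ≤ x.1 ∧ (x.1 : ℝ) < 2 * C ∧
        |(x.2.1 : ℝ)| ≤ S ∧ |(x.2.2.1 : ℝ)| ≤ R₁ ∧ |(x.2.2.2 : ℝ)| ≤ R₂ ∧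
        (N : ℤ) ∣ (u : ℤ) ^ 2 * d₁ * d₂ * x.1 +
          (u : ℤ) * (d₁ * x.2.2.2 + d₂ * x.2.2.1) + x.2.1}
        = {x : ℤ × ℤ × ℤ × ℤ |
        C ≤ x.1 ∧ (x.1 : ℝ) < 2 * C ∧
        |(x.2.1 : ℝ)| ≤ S ∧ |(x.2.2.1 : ℝ)| ≤ R₂ ∧ |(x.2.2.2 : ℝ)| ≤ R₁ ∧
        (N : ℤ) ∣ (u : ℤ) ^ 2 * d₂ * d₁ * x.1 +
          (u : ℤ) * (d₂ * x.2.2.2 + d₁ * x.2.2.1) + x.2.1} := by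
      ext ⟨c, s, r₂, r₁⟩
      simp only [Set.mem_image, Set.mem_setOf_eq, hswdef, Prod.mk.injEq]
      constructor
      · rintro ⟨⟨c', s', r₁', r₂'⟩, ⟨h1, h2, h3, h4, h5, h6⟩, hc, hs, hr₂, hr₁⟩
        simp only at hc hs hr₂ hr₁
        subst hc; subst hs; subst hr₂; subst hr₁
        refine ⟨h1, h2, h3, h5, h4, ?_⟩
        convert h6 using 1
        ring
      · rintro ⟨h1, h2, h3, h4, h5, h6⟩
        refine ⟨(c, s, r₁, r₂), ⟨h1, h2, h3, h5, h4, ?_⟩, rfl, rfl, rfl, rfl⟩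
        convert h6 using 1
        ring
    have hncard_eq : (Set.ncard {x : ℤ × ℤ × ℤ × ℤ |
        C ≤ x.1 ∧ (x.1 : ℝ) < 2 * C ∧
        |(x.2.1 : ℝ)| ≤ S ∧ |(x.2.2.1 : ℝ)| ≤ R₁ ∧ |(x.2.2.2 : ℝ)| ≤ R₂ ∧
        (N : ℤ) ∣ (u : ℤ) ^ 2 * d₁ * d₂ * x.1 +
          (u : ℤ) * (d₁ * x.2.2.2 + d₂ * x.2.2.1) + x.2.1})
        = Set.ncard {x : ℤ × ℤ × ℤ × ℤ |
        C ≤ x.1 ∧ (x.1 : ℝ) < 2 * C ∧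
        |(x.2.1 : ℝ)| ≤ S ∧ |(x.2.2.1 : ℝ)| ≤ R₂ ∧ |(x.2.2.2 : ℝ)| ≤ R₁ ∧
        (N : ℤ) ∣ (u : ℤ) ^ 2 * d₂ * d₁ * x.1 +
          (u : ℤ) * (d₂ * x.2.2.2 + d₁ * x.2.2.1) + x.2.1} := by
      rw [← himg, Set.ncard_image_of_injective _ hswinj]
    rw [hncard_eq]
    refine h.trans ?_
    have h0 : (0:ℝ) ≤ 216 * C * R₂ := by positivity
    have hDeq : (d₂:ℝ) * R₁ + (d₁:ℝ) * R₂ = (d₁:ℝ) * R₂ + (d₂:ℝ) * R₁ := by ring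
    rw [hDeq]
    nlinarith [mul_le_mul_of_nonneg_left (by linarith :
      S * ((d₁:ℝ) * R₂ + (d₂:ℝ) * R₁) / N + S * q / N + ((d₁:ℝ) * R₂ + (d₂:ℝ) * R₁) / q + 1
        ≤ S * ((d₁:ℝ) * R₂ + (d₂:ℝ) * R₁) / N + S * q / N +
          ((d₁:ℝ) * R₂ + (d₂:ℝ) * R₁) ^ 2 / (q * H) +
          ((d₁:ℝ) * R₂ + (d₂:ℝ) * R₁) / q + 1) h0]
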